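/- Let X, Y ∈ R^{d×d} be invertible matrices. Then the polar factors satisfy ‖P(X) − P(Y)‖_F ≤ 4‖X − Y‖_F / (σ_min(X) + σ_min(Y)), where σ_min denotes the smallest singular value. -/

import Mathlib

open Matrix BigOperators

noncomputable def frob {m n : Type*} [Fintype m] [Fintype n] (A : Matrix m n ℝ) : ℝ :=
  Real.sqrt (∑ i, ∑ j, (A i j) ^ 2)

/-- The lemma `Matrix.isHermitian_transpose_mul_self` of the older Mathlib (now removed). -/
theorem Matrix.isHermitian_transpose_mul_self {n : Type*} [Fintype n] (A : Matrix n n ℝ) :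
    (Aᵀ * A).IsHermitian := by
  simpa using Matrix.isHermitian_conjTranspose_mul_self A

/-- `Matrix.PosSemidef.sqrt` of the older Mathlib (now removed), with its old definition. -/
noncomputable def Matrix.PosSemidef.sqrt {n : Type*} [Fintype n] [DecidableEq n]
    {A : Matrix n n ℝ} (hA : A.PosSemidef) : Matrix n n ℝ :=
  hA.1.eigenvectorUnitary.1 * diagonal ((↑) ∘ (√·) ∘ hA.1.eigenvalues) *
    (star hA.1.eigenvectorUnitary : Matrix n n ℝ)

noncomputable def sv {d : ℕ} (A : Matrix (Fin d) (Fin d) ℝ) (i : Fin d) : ℝ :=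
  Real.sqrt ((Matrix.isHermitian_transpose_mul_self A).eigenvalues i)

/-- Smallest singular value. -/
noncomputable def smin {d : ℕ} (A : Matrix (Fin d) (Fin d) ℝ) : ℝ :=
  ⨅ i, sv A i

/-- Polar factor `P(M) = M (MᵀM)^{−1/2}` of a square real matrix. -/
noncomputable def polar {d : ℕ} (M : Matrix (Fin d) (Fin d) ℝ) :
    Matrix (Fin d) (Fin d) ℝ :=
  M * (Matrix.PosSemidef.sqrt (Matrix.posSemidef_conjTranspose_mul_self M))⁻¹

theorem Matrix.PosSemidef.posSemidef_sqrt {n : Type*} [Fintype n] [DecidableEq n]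
    {A : Matrix n n ℝ} (hA : A.PosSemidef) : hA.sqrt.PosSemidef := by
  unfold Matrix.PosSemidef.sqrt
  have hd : (Matrix.diagonal (((↑) ∘ (√·) ∘ hA.1.eigenvalues) : n → ℝ)).PosSemidef :=
    Matrix.PosSemidef.diagonal (fun i => by simp [Real.sqrt_nonneg])
  exact hd.mul_mul_conjTranspose_same (hA.1.eigenvectorUnitary : Matrix n n ℝ)

theorem Matrix.PosSemidef.sqrt_mul_self {n : Type*} [Fintype n] [DecidableEq n]
    {A : Matrix n n ℝ} (hA : A.PosSemidef) : hA.sqrt * hA.sqrt = A := by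
  unfold Matrix.PosSemidef.sqrt
  have hU : ((star hA.1.eigenvectorUnitary : unitary (Matrix n n ℝ)) : Matrix n n ℝ) *
      (hA.1.eigenvectorUnitary : Matrix n n ℝ) = 1 := Unitary.coe_star_mul_self _
  have hs := hA.1.spectral_theorem
  rw [Unitary.conjStarAlgAut_apply] at hs
  calc _ = (hA.1.eigenvectorUnitary : Matrix n n ℝ) *
        (diagonal (((↑) ∘ (√·) ∘ hA.1.eigenvalues) : n → ℝ) *
          (((star hA.1.eigenvectorUnitary : unitary (Matrix n n ℝ)) : Matrix n n ℝ) *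
            (hA.1.eigenvectorUnitary : Matrix n n ℝ)) *
          diagonal (((↑) ∘ (√·) ∘ hA.1.eigenvalues) : n → ℝ)) *
        ((star hA.1.eigenvectorUnitary : unitary (Matrix n n ℝ)) : Matrix n n ℝ) := by
        simp only [Matrix.mul_assoc, Unitary.coe_star]
    _ = (hA.1.eigenvectorUnitary : Matrix n n ℝ) *
        diagonal (RCLike.ofReal ∘ hA.1.eigenvalues) *
        ((star hA.1.eigenvectorUnitary : unitary (Matrix n n ℝ)) : Matrix n n ℝ) := by
        rw [hU, Matrix.mul_one, diagonal_mul_diagonal]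
        congr 2
        congr 1
        funext i
        simp [Real.mul_self_sqrt (hA.eigenvalues_nonneg i)]
    _ = A := hs.symm

noncomputable def ip {m n : Type*} [Fintype m] [Fintype n] (A B : Matrix m n ℝ) : ℝ :=
  ∑ i, ∑ j, A i j * B i j

section FrobLemmas
variable {m n : Type*} [Fintype m] [Fintype n]

lemma ip_self_nonneg (A : Matrix m n ℝ) : 0 ≤ ip A A := by
  exact Finset.sum_nonneg fun i _ => Finset.sum_nonneg fun j _ => mul_self_nonneg _

lemma frob_eq (A : Matrix m n ℝ) : frob A = Real.sqrt (ip A A) := by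
  unfold frob ip; congr 1; simp [sq]

lemma frob_nonneg (A : Matrix m n ℝ) : 0 ≤ frob A := Real.sqrt_nonneg _

lemma frob_sq (A : Matrix m n ℝ) : frob A ^ 2 = ip A A := by
  rw [frob_eq]; exact Real.sq_sqrt (ip_self_nonneg A)

lemma ip_le (A B : Matrix m n ℝ) : ip A B ≤ frob A * frob B := by
  classical
  have h := Finset.sum_mul_sq_le_sq_mul_sq Finset.univ
    (fun p : m × n => A p.1 p.2) (fun p : m × n => B p.1 p.2)
  have e1 : (∑ p : m × n, A p.1 p.2 * B p.1 p.2) = ip A B := by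
    rw [ip]; exact Fintype.sum_prod_type _
  have e2 : (∑ p : m × n, (A p.1 p.2) ^ 2) = ip A A := by
    rw [ip]; exact (Fintype.sum_prod_type _).trans (by simp [sq])
  have e3 : (∑ p : m × n, (B p.1 p.2) ^ 2) = ip B B := by
    rw [ip]; exact (Fintype.sum_prod_type _).trans (by simp [sq])
  rw [e1, e2, e3] at h
  calc ip A B ≤ |ip A B| := le_abs_self _
    _ = Real.sqrt ((ip A B) ^ 2) := (Real.sqrt_sq_eq_abs _).symm
    _ ≤ Real.sqrt (ip A A * ip B B) := Real.sqrt_le_sqrt h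
    _ = Real.sqrt (ip A A) * Real.sqrt (ip B B) := Real.sqrt_mul (ip_self_nonneg A) _
    _ = frob A * frob B := by rw [frob_eq, frob_eq]

lemma ip_add_right (A B C : Matrix m n ℝ) : ip A (B + C) = ip A B + ip A C := by
  unfold ip
  simp [Matrix.add_apply, mul_add, Finset.sum_add_distrib]

lemma frob_add_le (A B : Matrix m n ℝ) : frob (A + B) ≤ frob A + frob B := by
  have hexp : ip (A + B) (A + B) = ip A A + 2 * ip A B + ip B B := by
    unfold ip
    have : ∀ i j, (A i j + B i j) * (A i j + B i j)
        = A i j * A i j + 2 * (A i j * B i j) + B i j * B i j := by intros; ring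
    simp only [Matrix.add_apply, this, Finset.sum_add_distrib, Finset.mul_sum]
  have hle : ip (A + B) (A + B) ≤ (frob A + frob B) ^ 2 := by
    have := ip_le A B
    have hA := frob_sq A; have hB := frob_sq B
    nlinarith [frob_nonneg A, frob_nonneg B]
  calc frob (A + B) = Real.sqrt (ip (A+B) (A+B)) := frob_eq _
    _ ≤ Real.sqrt ((frob A + frob B) ^ 2) := Real.sqrt_le_sqrt hle
    _ = frob A + frob B := Real.sqrt_sq (add_nonneg (frob_nonneg A) (frob_nonneg B))

lemma frob_neg (A : Matrix m n ℝ) : frob (-A) = frob A := by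
  unfold frob; simp

lemma frob_sub_le (A B : Matrix m n ℝ) : frob (A - B) ≤ frob A + frob B := by
  rw [sub_eq_add_neg]
  simpa [frob_neg] using frob_add_le A (-B)

lemma frob_transpose (A : Matrix m n ℝ) : frob Aᵀ = frob A := by
  unfold frob
  rw [Finset.sum_comm]
  rfl

lemma ip_eq_trace (A B : Matrix m n ℝ) : ip A B = (Aᵀ * B).trace := by
  unfold ip Matrix.trace
  simp only [Matrix.diag, Matrix.mul_apply, Matrix.transpose_apply]
  exact Finset.sum_comm

lemma sumsq_eq_trace (B : Matrix m n ℝ) : (∑ i, ∑ j, (B i j) ^ 2) = (Bᵀ * B).trace := by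
  have := ip_eq_trace B B
  unfold ip at this
  rw [← this]
  simp [sq]

lemma frob_mul_left {k : Type*} [Fintype k] [DecidableEq m]
    (P : Matrix k m ℝ) (h : Pᵀ * P = 1) (A : Matrix m n ℝ) : frob (P * A) = frob A := by
  unfold frob
  congr 1
  rw [sumsq_eq_trace, sumsq_eq_trace, Matrix.transpose_mul, Matrix.mul_assoc,
    ← Matrix.mul_assoc Pᵀ, h, Matrix.one_mul]

lemma frob_mul_right {k : Type*} [Fintype k] [DecidableEq n]
    (Q : Matrix n k ℝ) (h : Q * Qᵀ = 1) (A : Matrix m n ℝ) : frob (A * Q) = frob A := by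
  rw [← frob_transpose (A * Q), Matrix.transpose_mul,
    frob_mul_left Qᵀ (by rwa [Matrix.transpose_transpose]) Aᵀ, frob_transpose]

end FrobLemmas

section Quad
variable {m n : Type*} [Fintype m] [Fintype n]

lemma ip_mul_left_ge {d : ℕ} (H D : Matrix (Fin d) (Fin d) ℝ) {s : ℝ}
    (h : ∀ v : Fin d → ℝ, s * (v ⬝ᵥ v) ≤ v ⬝ᵥ (H *ᵥ v)) : s * ip D D ≤ ip D (H * D) := by
  have lhs : ip D (H * D) = ∑ j, (fun i => D i j) ⬝ᵥ (H *ᵥ fun i => D i j) := by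
    unfold ip; rw [Finset.sum_comm]
    refine Finset.sum_congr rfl fun j _ => Finset.sum_congr rfl fun i _ => ?_
    simp [Matrix.mul_apply, dotProduct, Matrix.mulVec]
  have lhs2 : ip D D = ∑ j, (fun i => D i j) ⬝ᵥ (fun i => D i j) := by
    unfold ip; rw [Finset.sum_comm]; rfl
  rw [lhs, lhs2, Finset.mul_sum]
  exact Finset.sum_le_sum fun j _ => h _

lemma ip_mul_right_ge {d : ℕ} (K D : Matrix (Fin d) (Fin d) ℝ) {s : ℝ}
    (h : ∀ v : Fin d → ℝ, s * (v ⬝ᵥ v) ≤ v ⬝ᵥ (K *ᵥ v)) : s * ip D D ≤ ip D (D * K) := by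
  have lhs : ip D (D * K) = ∑ i, (fun j => D i j) ⬝ᵥ (K *ᵥ fun j => D i j) := by
    unfold ip
    refine Finset.sum_congr rfl fun i _ => ?_
    simp only [Matrix.mul_apply, dotProduct, Matrix.mulVec, Finset.mul_sum]
    rw [Finset.sum_comm]
    exact Finset.sum_congr rfl fun j _ => Finset.sum_congr rfl fun k _ => by ring
  have lhs2 : ip D D = ∑ i, (fun j => D i j) ⬝ᵥ (fun j => D i j) := rfl
  rw [lhs, lhs2, Finset.mul_sum]
  exact Finset.sum_le_sum fun i _ => h _

lemma quad_sqrt {d : ℕ} {A : Matrix (Fin d) (Fin d) ℝ} (hA : A.PosSemidef) {s : ℝ}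
    (hs : ∀ i, s ≤ Real.sqrt (hA.1.eigenvalues i)) (v : Fin d → ℝ) :
    s * (v ⬝ᵥ v) ≤ v ⬝ᵥ (hA.sqrt *ᵥ v) := by
  set U : Matrix (Fin d) (Fin d) ℝ := (hA.1.eigenvectorUnitary : Matrix (Fin d) (Fin d) ℝ) with hU
  have hUU : U * Uᴴ = 1 := Matrix.mem_unitaryGroup_iff.mp hA.1.eigenvectorUnitary.2
  have h1 : hA.sqrt = U * diagonal (RCLike.ofReal ∘ Real.sqrt ∘ hA.1.eigenvalues) * Uᴴ := rfl
  have key : (hA.sqrt - s • (1 : Matrix (Fin d) (Fin d) ℝ)).PosSemidef := by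
    have h2 : s • (1 : Matrix (Fin d) (Fin d) ℝ) = U * (s • 1) * Uᴴ := by
      rw [Matrix.mul_smul, Matrix.mul_one, Matrix.smul_mul, hUU]
    have h3 : hA.sqrt - s • (1 : Matrix (Fin d) (Fin d) ℝ)
        = U * (diagonal (RCLike.ofReal ∘ Real.sqrt ∘ hA.1.eigenvalues) - s • 1) * Uᴴ := by
      rw [Matrix.mul_sub, Matrix.sub_mul, ← h1, ← h2]
    rw [h3]
    refine Matrix.PosSemidef.mul_mul_conjTranspose_same ?_ U
    rw [Matrix.smul_one_eq_diagonal, Matrix.diagonal_sub]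
    refine Matrix.posSemidef_diagonal_iff.mpr fun i => sub_nonneg.mpr ?_
    simpa using hs i
  have h2 := key.dotProduct_mulVec_nonneg v
  have hstar : star v = v := by funext i; simp
  simp only [hstar, Matrix.sub_mulVec, Matrix.smul_mulVec, Matrix.one_mulVec,
    dotProduct_sub, dotProduct_smul, smul_eq_mul] at h2
  linarith

end Quad

section MainSetup
variable {d : ℕ}

lemma posDef_tmul {X : Matrix (Fin d) (Fin d) ℝ} (hX : IsUnit X.det) : (Xᵀ * X).PosDef := by
  refine Matrix.posDef_iff_dotProduct_mulVec.mpr ⟨Matrix.isHermitian_transpose_mul_self X, fun v hv => ?_⟩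
  have hinj : Function.Injective (X.mulVec) :=
    Matrix.mulVec_injective_iff_isUnit.mpr ((Matrix.isUnit_iff_isUnit_det X).mpr hX)
  have hXv : X *ᵥ v ≠ 0 := fun h => hv (hinj (by rw [h, Matrix.mulVec_zero]))
  have e : star v ⬝ᵥ ((Xᵀ * X) *ᵥ v) = star (X *ᵥ v) ⬝ᵥ (X *ᵥ v) := by
    rw [← Matrix.mulVec_mulVec, Matrix.dotProduct_mulVec, Matrix.star_mulVec]
    rfl
  rw [e]
  exact Matrix.dotProduct_star_self_pos_iff.mpr hXv

lemma smin_pos [NeZero d] {X : Matrix (Fin d) (Fin d) ℝ} (hX : IsUnit X.det) : 0 < smin X := by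
  obtain ⟨i, hi⟩ := exists_eq_ciInf_of_finite (f := sv X)
  rw [smin, ← hi]
  exact Real.sqrt_pos.mpr ((posDef_tmul hX).eigenvalues_pos i)

lemma smin_le {X : Matrix (Fin d) (Fin d) ℝ} (i : Fin d) :
    smin X ≤ Real.sqrt ((Matrix.posSemidef_conjTranspose_mul_self X).1.eigenvalues i) :=
  ciInf_le (Set.Finite.bddBelow (Set.finite_range (sv X))) i

end MainSetup

/-- Lipschitz bound for the polar factor of invertible matrices. -/
theorem polar_lipschitz (d : ℕ) (X Y : Matrix (Fin d) (Fin d) ℝ)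
    (hX : IsUnit X.det) (hY : IsUnit Y.det) :
    frob (polar X - polar Y) ≤ 4 * frob (X - Y) / (smin X + smin Y) := by
  rcases Nat.eq_zero_or_pos d with hd | hd
  · subst hd
    simp [frob]
  · haveI : NeZero d := ⟨hd.ne'⟩
    set P := polar X with hP
    set Q := polar Y with hQ
    set H := (Matrix.posSemidef_conjTranspose_mul_self X).sqrt with hH
    set K := (Matrix.posSemidef_conjTranspose_mul_self Y).sqrt with hK
    have hHps : H.PosSemidef := (Matrix.posSemidef_conjTranspose_mul_self X).posSemidef_sqrt
    have hKps : K.PosSemidef := (Matrix.posSemidef_conjTranspose_mul_self Y).posSemidef_sqrt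
    have hHsym : Hᵀ = H := hHps.1
    have hKsym : Kᵀ = K := hKps.1
    have hHH : H * H = Xᵀ * X := (Matrix.posSemidef_conjTranspose_mul_self X).sqrt_mul_self
    have hKK : K * K = Yᵀ * Y := (Matrix.posSemidef_conjTranspose_mul_self Y).sqrt_mul_self
    have hHdet : IsUnit H.det := by
      have h1 : H.det * H.det = X.det * X.det := by
        rw [← Matrix.det_mul, hHH, Matrix.det_mul, Matrix.det_transpose]
      have h2 : IsUnit (H.det * H.det) := by rw [h1]; exact hX.mul hX
      exact isUnit_of_mul_isUnit_left h2
    have hKdet : IsUnit K.det := by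
      have h1 : K.det * K.det = Y.det * Y.det := by
        rw [← Matrix.det_mul, hKK, Matrix.det_mul, Matrix.det_transpose]
      have h2 : IsUnit (K.det * K.det) := by rw [h1]; exact hY.mul hY
      exact isUnit_of_mul_isUnit_left h2
    have hPH : P * H = X := by
      rw [hP, polar, ← hH]
      exact Matrix.nonsing_inv_mul_cancel_right H X hHdet
    have hQK : Q * K = Y := by
      rw [hQ, polar, ← hK]
      exact Matrix.nonsing_inv_mul_cancel_right K Y hKdet
    have hPt : Pᵀ * P = 1 := by
      have h1 : Pᵀ = H⁻¹ * Xᵀ := by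
        rw [hP, polar, ← hH, Matrix.transpose_mul, Matrix.transpose_nonsing_inv, hHsym]
      rw [h1, hP, polar, ← hH, Matrix.mul_assoc, ← Matrix.mul_assoc Xᵀ X H⁻¹, ← hHH,
        Matrix.mul_nonsing_inv_cancel_right H H hHdet]
      exact Matrix.nonsing_inv_mul H hHdet
    have hQt : Qᵀ * Q = 1 := by
      have h1 : Qᵀ = K⁻¹ * Yᵀ := by
        rw [hQ, polar, ← hK, Matrix.transpose_mul, Matrix.transpose_nonsing_inv, hKsym]
      rw [h1, hQ, polar, ← hK, Matrix.mul_assoc, ← Matrix.mul_assoc Yᵀ Y K⁻¹, ← hKK,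
        Matrix.mul_nonsing_inv_cancel_right K K hKdet]
      exact Matrix.nonsing_inv_mul K hKdet
    have hPPt : P * Pᵀ = 1 := mul_eq_one_comm.mp hPt
    have hQQt : Q * Qᵀ = 1 := mul_eq_one_comm.mp hQt
    have hqH : ∀ v : Fin d → ℝ, smin X * (v ⬝ᵥ v) ≤ v ⬝ᵥ (H *ᵥ v) := fun v =>
      quad_sqrt (Matrix.posSemidef_conjTranspose_mul_self X) (fun i => smin_le i) v
    have hqK : ∀ v : Fin d → ℝ, smin Y * (v ⬝ᵥ v) ≤ v ⬝ᵥ (K *ᵥ v) := fun v =>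
      quad_sqrt (Matrix.posSemidef_conjTranspose_mul_self Y) (fun i => smin_le i) v
    set D : Matrix (Fin d) (Fin d) ℝ := 1 - Pᵀ * Q with hD
    have hR : Pᵀ * (X - Y) - (X - Y)ᵀ * Q = H * D + D * K := by
      have e1 : (X - Y)ᵀ = H * Pᵀ - K * Qᵀ := by
        rw [← hPH, ← hQK, Matrix.transpose_sub, Matrix.transpose_mul, Matrix.transpose_mul,
          hHsym, hKsym]
      have c1 : Pᵀ * (P * H) = H := by rw [← Matrix.mul_assoc, hPt, Matrix.one_mul]
      have c2 : K * (Qᵀ * Q) = K := by rw [hQt, Matrix.mul_one]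
      rw [e1, hD, ← hPH, ← hQK]
      simp only [Matrix.mul_sub, Matrix.sub_mul, Matrix.one_mul, Matrix.mul_one,
        Matrix.mul_assoc]
      rw [c1, c2]
      abel
    have hfR : frob (H * D + D * K) ≤ 2 * frob (X - Y) := by
      rw [← hR]
      have t1 : frob (Pᵀ * (X - Y)) = frob (X - Y) :=
        frob_mul_left Pᵀ (by rw [Matrix.transpose_transpose]; exact hPPt) _
      have t2 : frob ((X - Y)ᵀ * Q) = frob (X - Y) := by
        rw [frob_mul_right Q hQQt, frob_transpose]
      calc frob (Pᵀ * (X - Y) - (X - Y)ᵀ * Q)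
          ≤ frob (Pᵀ * (X - Y)) + frob ((X - Y)ᵀ * Q) := frob_sub_le _ _
        _ = 2 * frob (X - Y) := by rw [t1, t2]; ring
    have hip : (smin X + smin Y) * ip D D ≤ ip D (H * D + D * K) := by
      rw [ip_add_right, add_mul]
      exact add_le_add (ip_mul_left_ge H D hqH) (ip_mul_right_ge K D hqK)
    have hPQ : P - Q = P * D := by
      rw [hD, Matrix.mul_sub, Matrix.mul_one, ← Matrix.mul_assoc, hPPt, Matrix.one_mul]
    have hfPQ : frob (P - Q) = frob D := by rw [hPQ, frob_mul_left P hPt]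
    have hs : 0 < smin X + smin Y := add_pos (smin_pos hX) (smin_pos hY)
    have hCS : ip D (H * D + D * K) ≤ frob D * (2 * frob (X - Y)) :=
      le_trans (ip_le D _) (mul_le_mul_of_nonneg_left hfR (frob_nonneg D))
    have hmain : (smin X + smin Y) * (frob D) ^ 2 ≤ frob D * (2 * frob (X - Y)) := by
      rw [frob_sq]; exact le_trans hip hCS
    rw [hfPQ]
    rcases eq_or_lt_of_le (frob_nonneg D) with h0 | h0
    · rw [← h0]
      exact div_nonneg (by nlinarith [frob_nonneg (X - Y)]) hs.le
    · rw [le_div_iff₀ hs]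
      nlinarith [hmain, h0, frob_nonneg (X - Y), mul_pos h0 hs]
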